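/- Let T be a q-ary tree of height h−1 that is a subgraph of a graph G, where every vertex of T has degree at least 2q^h in G. Then G contains a q-ary tree of height h as a subgraph. (Key inequality: 2q^h > (q^{h-1} − 1)q + |V(T)|, where |V(T)| = (q^h − 1)/(q − 1) ≤ 2q^{h-1} for q ≥ 2.) -/

import Mathlib

/-- The vertices of the complete `q`-ary tree of height `h`: sequences of branching choices
of length at most `h` (the root is the empty sequence, depth = length). -/
def qaryVert (q h : ℕ) := {l : List (Fin q) // l.length ≤ h}

/-- The complete `q`-ary tree of height `h`: every vertex at depth less than `h` has exactly
`q` children, obtained by prepending a branching choice. -/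
def qaryTree (q h : ℕ) : SimpleGraph (qaryVert q h) :=
  SimpleGraph.fromRel (fun a b => ∃ i : Fin q, b.val = i :: a.val)

/-- `G` contains a subgraph isomorphic to the `q`-ary tree of height `h`. -/
def ContainsQaryTree {V : Type*} (G : SimpleGraph V) (q h : ℕ) : Prop :=
  ∃ f : qaryVert q h → V, Function.Injective f ∧
    ∀ a b, (qaryTree q h).Adj a b → G.Adj (f a) (f b)

/- ### Auxiliary material -/

instance finiteOption {α : Type*} [Finite α] : Finite (Option α) := by
  haveI := Fintype.ofFinite α
  infer_instance

def qaryVertZero (q : ℕ) : qaryVert q 0 ≃ Unit where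
  toFun _ := ()
  invFun _ := ⟨[], le_refl 0⟩
  left_inv := by
    rintro ⟨l, hl⟩
    have : l = [] := List.length_eq_zero_iff.mp (Nat.le_zero.mp hl)
    subst this; rfl
  right_inv := by rintro ⟨⟩; rfl

def qaryVertSucc (q m : ℕ) : qaryVert q (m + 1) ≃ Option (Fin q × qaryVert q m) where
  toFun x := match x with
    | ⟨[], _⟩ => none
    | ⟨i :: t, h⟩ => some (i, ⟨t, by simpa using h⟩)
  invFun o := match o with
    | none => ⟨[], by simp⟩
    | some (i, ⟨t, ht⟩) => ⟨i :: t, by simpa using ht⟩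
  left_inv := by rintro ⟨(_ | ⟨i, t⟩), h⟩ <;> rfl
  right_inv := by rintro (_ | ⟨i, ⟨t, ht⟩⟩) <;> rfl

instance qaryVertFinite (q m : ℕ) : Finite (qaryVert q m) := by
  induction m with
  | zero => exact Finite.of_equiv _ (qaryVertZero q).symm
  | succ m ih =>
      haveI := ih
      exact Finite.of_equiv _ (qaryVertSucc q m).symm

lemma qaryVertCard {q : ℕ} (hq : 2 ≤ q) (m : ℕ) :
    Nat.card (qaryVert q m) + 1 ≤ 2 * q ^ m := by
  induction m with
  | zero => rw [Nat.card_congr (qaryVertZero q)]; simp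
  | succ m ih =>
      rw [Nat.card_congr (qaryVertSucc q m), Finite.card_option, Nat.card_prod,
        Nat.card_eq_fintype_card, Fintype.card_fin]
      have h1 : q * (Nat.card (qaryVert q m) + 1) ≤ q * (2 * q ^ m) :=
        Nat.mul_le_mul_left _ ih
      have h2 : 2 * q ^ (m + 1) = q * (2 * q ^ m) := by ring
      nlinarith [Nat.mul_le_mul_right (Nat.card (qaryVert q m)) hq]

def qaryLeaf (q m : ℕ) := {l : List (Fin q) // l.length = m}

def qaryLeafZero (q : ℕ) : qaryLeaf q 0 ≃ Unit where
  toFun _ := ()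
  invFun _ := ⟨[], rfl⟩
  left_inv := by
    rintro ⟨l, hl⟩
    have : l = [] := List.length_eq_zero_iff.mp hl
    subst this; rfl
  right_inv := by rintro ⟨⟩; rfl

def qaryLeafSucc (q m : ℕ) : qaryLeaf q (m + 1) ≃ Fin q × qaryLeaf q m where
  toFun x := match x with
    | ⟨i :: t, h⟩ => (i, ⟨t, by simpa using h⟩)
  invFun p := match p with
    | (i, ⟨t, ht⟩) => ⟨i :: t, by simpa using ht⟩
  left_inv := by
    rintro ⟨(_ | ⟨i, t⟩), h⟩
    · simp at h
    · rfl
  right_inv := by rintro ⟨i, ⟨t, ht⟩⟩; rfl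

instance qaryLeafFinite (q m : ℕ) : Finite (qaryLeaf q m) := by
  induction m with
  | zero => exact Finite.of_equiv _ (qaryLeafZero q).symm
  | succ m ih =>
      haveI := ih
      exact Finite.of_equiv _ (qaryLeafSucc q m).symm

lemma qaryLeafCard (q m : ℕ) : Nat.card (qaryLeaf q m) ≤ q ^ m := by
  induction m with
  | zero => rw [Nat.card_congr (qaryLeafZero q)]; simp
  | succ m ih =>
      rw [Nat.card_congr (qaryLeafSucc q m), Nat.card_prod, Nat.card_eq_fintype_card,
        Fintype.card_fin, pow_succ, Nat.mul_comm (q ^ m) q]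
      exact Nat.mul_le_mul_left _ ih

/-- Greedy selection of pairwise disjoint `q`-sets avoiding a base set `A`. -/
lemma greedy {V : Type*} [DecidableEq V] (A : Finset V) (nbr : ℕ → Finset V) (q : ℕ) :
    ∀ n, (∀ k < n, A.card + q * n ≤ (nbr k).card) →
    ∃ F : ℕ → Finset V,
      (∀ k < n, F k ⊆ nbr k ∧ (F k).card = q ∧ Disjoint (F k) A) ∧
      (∀ j k, j < k → k < n → Disjoint (F j) (F k)) := by
  intro n
  induction n with
  | zero =>
    exact fun _ => ⟨fun _ => ∅, fun k hk => absurd hk (Nat.not_lt_zero k),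
      fun j k _ hk => absurd hk (Nat.not_lt_zero k)⟩
  | succ n ih =>
    intro hcard
    obtain ⟨F, hF, hdisj⟩ := ih (fun k hk =>
      le_trans (Nat.add_le_add_left (Nat.mul_le_mul_left q (Nat.le_succ n)) _)
        (hcard k (Nat.lt_succ_of_lt hk)))
    set U := A ∪ (Finset.range n).biUnion F with hU
    have hUcard : U.card ≤ A.card + q * n := by
      calc U.card ≤ A.card + ((Finset.range n).biUnion F).card := Finset.card_union_le _ _
        _ ≤ A.card + ∑ j ∈ Finset.range n, (F j).card :=
            Nat.add_le_add_left (Finset.card_biUnion_le) _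
        _ ≤ A.card + ∑ j ∈ Finset.range n, q := by
            gcongr with j hj
            exact le_of_eq (hF j (Finset.mem_range.mp hj)).2.1
        _ = A.card + q * n := by simp [Finset.sum_const, Nat.mul_comm]
    have hqle : q ≤ ((nbr n) \ U).card := by
      have h1 := hcard n (Nat.lt_succ_self n)
      have h2 : (nbr n).card ≤ ((nbr n) \ U).card + U.card :=
        Finset.card_le_card_sdiff_add_card
      have h3 : q * (n + 1) = q * n + q := by ring
      linarith
    obtain ⟨B, hBsub, hBcard⟩ := Finset.exists_subset_card_eq hqle
    refine ⟨fun k => if k = n then B else F k, ?_, ?_⟩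
    · intro k hk
      by_cases hkn : k = n
      · subst hkn
        simp only [if_pos rfl]
        refine ⟨hBsub.trans (Finset.sdiff_subset), hBcard, ?_⟩
        exact Finset.disjoint_left.mpr fun x hx hxA =>
          (Finset.mem_sdiff.mp (hBsub hx)).2 (Finset.mem_union_left _ hxA)
      · have hk' : k < n := lt_of_le_of_ne (Nat.lt_succ_iff.mp hk) hkn
        simpa [hkn] using hF k hk'
    · intro j k hjk hk
      by_cases hkn : k = n
      · have hj : j < n := hkn ▸ hjk
        have hd : Disjoint B (F j) := Finset.disjoint_left.mpr fun x hx hxF =>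
          (Finset.mem_sdiff.mp (hBsub hx)).2 (Finset.mem_union_right _
            (Finset.mem_biUnion.mpr ⟨j, Finset.mem_range.mpr hj, hxF⟩))
        have hjne : j ≠ n := by omega
        show Disjoint (if j = n then B else F j) (if k = n then B else F k)
        rw [if_neg hjne, if_pos hkn]
        exact hd.symm
      · have hk' : k < n := lt_of_le_of_ne (Nat.lt_succ_iff.mp hk) hkn
        have hj : j ≠ n := by omega
        simpa [hj, hkn] using hdisj j k hjk hk'

theorem stmt12 {V : Type*} [Fintype V] (G : SimpleGraph V) (q h : ℕ)
    (hq : 2 ≤ q) (hh : 1 ≤ h)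
    (f : qaryVert q (h - 1) → V) (hf : Function.Injective f)
    (hsub : ∀ a b, (qaryTree q (h - 1)).Adj a b → G.Adj (f a) (f b))
    (hdeg : ∀ a, 2 * q ^ h ≤ Set.ncard {w | G.Adj (f a) w}) :
    ContainsQaryTree G q h := by
  classical
  obtain ⟨m, rfl⟩ : ∃ m, h = m + 1 := ⟨h - 1, (Nat.succ_pred_eq_of_pos hh).symm⟩
  -- basic data
  set n := Nat.card (qaryLeaf q m) with hn
  have e : qaryLeaf q m ≃ Fin n := Finite.equivFin _
  set lv : qaryLeaf q m → qaryVert q m := fun l => ⟨l.val, le_of_eq l.prop⟩ with hlv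
  have hrangefin : (Set.range f).Finite := Set.toFinite _
  set A : Finset V := hrangefin.toFinset with hA
  set nbr : ℕ → Finset V := fun k =>
    if hk : k < n then G.neighborFinset (f (lv (e.symm ⟨k, hk⟩))) else ∅ with hnbr
  -- cardinality hypotheses
  have hAcard : A.card + 1 ≤ 2 * q ^ m := by
    have h1 : A.card = Nat.card (qaryVert q m) := by
      rw [hA, ← Set.ncard_eq_toFinset_card _ hrangefin, ← Nat.card_coe_set_eq,
        Nat.card_range_of_injective hf]
      rfl
    rw [h1]
    exact qaryVertCard hq m
  have hncard : n ≤ q ^ m := qaryLeafCard q m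
  have hbig : ∀ k < n, A.card + q * n ≤ (nbr k).card := by
    intro k hk
    have hdegk := hdeg (lv (e.symm ⟨k, hk⟩))
    have hnb : (nbr k).card = Set.ncard {w | G.Adj (f (lv (e.symm ⟨k, hk⟩))) w} := by
      rw [hnbr]
      simp only [dif_pos hk]
      rw [SimpleGraph.neighborFinset_def, ← Set.ncard_eq_toFinset_card']
      rfl
    rw [hnb]
    have hqn : q * n ≤ q * q ^ m := Nat.mul_le_mul_left _ hncard
    have h2q : 2 * q ^ m ≤ q * q ^ m := Nat.mul_le_mul_right _ hq
    have hps : q ^ (m + 1) = q * q ^ m := by ring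
    calc A.card + q * n ≤ 2 * q ^ (m + 1) := by
            rw [hps]; linarith
      _ ≤ _ := hdegk
  obtain ⟨F, hF, hdisj⟩ := greedy A nbr q n hbig
  -- properties of the chosen sets, reindexed by leaves
  have hFprop : ∀ l : qaryLeaf q m,
      (F (e l)).card = q ∧ F (e l) ⊆ G.neighborFinset (f (lv l)) ∧ Disjoint (F (e l)) A := by
    intro l
    have hk : ((e l : Fin n) : ℕ) < n := (e l).isLt
    obtain ⟨h1, h2, h3⟩ := hF _ hk
    refine ⟨h2, ?_, h3⟩
    have hnbreq : nbr (e l) = G.neighborFinset (f (lv l)) := by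
      rw [hnbr]
      simp only [dif_pos hk]
      have h4 : (⟨((e l : Fin n) : ℕ), hk⟩ : Fin n) = e l := rfl
      rw [h4, Equiv.symm_apply_apply]
    rw [← hnbreq]
    exact h1
  -- the new-vertex assignment
  set E : qaryLeaf q m → Fin q → V :=
    fun l i => ((F (e l)).equivFinOfCardEq (hFprop l).1).symm i with hE
  have hEmem : ∀ l i, E l i ∈ F (e l) := fun l i => Finset.coe_mem _
  have hEadj : ∀ l i, G.Adj (f (lv l)) (E l i) := by
    intro l i
    have := (hFprop l).2.1 (hEmem l i)
    rwa [SimpleGraph.mem_neighborFinset] at this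
  have hEnotA : ∀ l i, E l i ∉ Set.range f := by
    intro l i hmem
    exact Finset.disjoint_left.mp (hFprop l).2.2 (hEmem l i) (hrangefin.mem_toFinset.mpr hmem)
  have hEinj : ∀ l i l' i', E l i = E l' i' → l = l' ∧ i = i' := by
    intro l i l' i' heq
    have hll : l = l' := by
      by_contra hne
      have hee : (e l : ℕ) ≠ (e l' : ℕ) := by
        intro hc
        exact hne (e.injective (Fin.ext hc))
      have hmem1 := hEmem l i
      have hmem2 := hEmem l' i'
      rw [heq] at hmem1
      rcases Nat.lt_or_ge (e l : ℕ) (e l' : ℕ) with hlt | hge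
      · exact Finset.disjoint_left.mp (hdisj _ _ hlt (e l').isLt) hmem1 hmem2
      · have hlt : (e l' : ℕ) < (e l : ℕ) := lt_of_le_of_ne hge (Ne.symm hee)
        exact Finset.disjoint_left.mp (hdisj _ _ hlt (e l).isLt) hmem2 hmem1
    subst hll
    refine ⟨rfl, ?_⟩
    have := Subtype.coe_injective (a₁ := ((F (e l)).equivFinOfCardEq (hFprop l).1).symm i)
      (a₂ := ((F (e l)).equivFinOfCardEq (hFprop l).1).symm i') heq
    exact ((F (e l)).equivFinOfCardEq (hFprop l).1).symm.injective this
  -- the extended embedding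
  set f' : qaryVert q (m + 1) → V := fun x =>
    if hx : x.val.length ≤ m then f ⟨x.val, hx⟩
    else E ⟨x.val.tail, by
        have h1 : x.val.length ≤ m + 1 := x.prop
        have h2 : x.val.length = m + 1 := le_antisymm h1 (not_le.mp hx)
        simp [h2]⟩
      (x.val.head (by
        intro hnil
        exact hx (by simp [hnil]))) with hf'
  refine ⟨f', ?_, ?_⟩
  · -- injectivity
    rintro ⟨xv, hxv⟩ ⟨yv, hyv⟩ hxy
    simp only [hf'] at hxy
    by_cases hx : xv.length ≤ m <;> by_cases hy : yv.length ≤ m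
    · rw [dif_pos hx, dif_pos hy] at hxy
      have h6 : xv = yv := congrArg Subtype.val (hf hxy)
      exact Subtype.ext h6
    · rw [dif_pos hx, dif_neg hy] at hxy
      exact absurd ⟨_, hxy⟩ (hEnotA _ _)
    · rw [dif_neg hx, dif_pos hy] at hxy
      exact absurd ⟨_, hxy.symm⟩ (hEnotA _ _)
    · rw [dif_neg hx, dif_neg hy] at hxy
      obtain ⟨hl, hi⟩ := hEinj _ _ _ _ hxy
      have htail : xv.tail = yv.tail := congrArg Subtype.val hl
      have hxnil : xv ≠ [] := fun hnil => hx (by simp [hnil])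
      have hynil : yv ≠ [] := fun hnil => hy (by simp [hnil])
      apply Subtype.ext
      show xv = yv
      rw [← List.cons_head_tail hxnil, ← List.cons_head_tail hynil]
      rw [htail, hi]
  · -- adjacency
    have key : ∀ (a b : qaryVert q (m + 1)), (∃ i : Fin q, b.val = i :: a.val) →
        G.Adj (f' a) (f' b) := by
      rintro ⟨av, hav⟩ ⟨bv, hbv⟩ ⟨i, hi⟩
      simp only at hi
      subst hi
      have hav' : av.length ≤ m := by
        have := hbv
        simp only [List.length_cons] at this
        omega
      have ha : f' ⟨av, hav⟩ = f ⟨av, hav'⟩ := dif_pos hav'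
      by_cases hb : (i :: av).length ≤ m
      · have hb' : f' ⟨i :: av, hbv⟩ = f ⟨i :: av, hb⟩ := dif_pos hb
        rw [ha, hb']
        apply hsub
        refine (SimpleGraph.fromRel_adj _ _ _).mpr ?_
        constructor
        · intro hcon
          have : av = i :: av := congrArg Subtype.val hcon
          exact List.cons_ne_self i av this.symm
        · exact Or.inl ⟨i, rfl⟩
      · rw [ha, hf']
        simp only [dif_neg hb]
        have hlen : av.length = m := by
          have h5 := not_le.mp hb
          simp only [List.length_cons] at h5
          omega
        exact hEadj ⟨av, hlen⟩ i
    intro a b hab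
    rw [qaryTree, SimpleGraph.fromRel_adj] at hab
    obtain ⟨hne, hcase | hcase⟩ := hab
    · exact key a b hcase
    · exact (key b a hcase).symm
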